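/- Let E ⊂ X × X be a Lebesgue-measurable set. Then for every ε > 0 there exists δ₀ > 0 such that for all δ ∈ (0,δ₀), the Lebesgue measure in ℝ^{2m} satisfies λ^{2m}((S_δ × S_δᶜ) ∩ E) ≥ (1/4 − ε) · λ^{2m}(E), where S_δᶜ = ℝ^m \ S_δ. -/

import Mathlib

open MeasureTheory ENNReal Filter Topology

/-- The checkerboard pattern `S_δ ⊆ ℝ^m`: the union of the open cubes of side length `δ`
centred at the points `δ·x` for `x ∈ ℤ^m` with `∑ j, x j` even. -/
def checkerboard (m : ℕ) (δ : ℝ) : Set (Fin m → ℝ) :=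
  ⋃ x ∈ {x : Fin m → ℤ | Even (∑ j, x j)},
    Set.univ.pi fun j => Set.Ioo ((x j : ℝ) * δ - δ / 2) ((x j : ℝ) * δ + δ / 2)

namespace Stmt18Aux

variable {m : ℕ}

lemma mem_checkerboard {δ : ℝ} {z : Fin m → ℝ} :
    z ∈ checkerboard m δ ↔ ∃ x : Fin m → ℤ, Even (∑ j, x j) ∧
      ∀ j, (x j : ℝ) * δ - δ / 2 < z j ∧ z j < (x j : ℝ) * δ + δ / 2 := by
  simp [checkerboard, Set.mem_iUnion, Set.mem_pi, Set.mem_Ioo]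

lemma isOpen_checkerboard (δ : ℝ) : IsOpen (checkerboard m δ) := by
  refine isOpen_biUnion fun x _ => ?_
  exact isOpen_set_pi Set.finite_univ fun j _ => isOpen_Ioo

lemma int_unique {δ : ℝ} (hδ : 0 < δ) {a b : ℤ} {t : ℝ}
    (ha : (a : ℝ) * δ - δ / 2 < t ∧ t < (a : ℝ) * δ + δ / 2)
    (hb : (b : ℝ) * δ - δ / 2 < t ∧ t < (b : ℝ) * δ + δ / 2) : a = b := by
  have h1 : (a : ℝ) < (b : ℝ) + 1 := by nlinarith [ha.1, ha.2, hb.1, hb.2]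
  have h2 : (b : ℝ) < (a : ℝ) + 1 := by nlinarith [ha.1, ha.2, hb.1, hb.2]
  have h1' : a < b + 1 := by exact_mod_cast h1
  have h2' : b < a + 1 := by exact_mod_cast h2
  omega

lemma disj {δ : ℝ} (hδ : 0 < δ) (i : Fin m) {z : Fin m → ℝ}
    (h1 : z ∈ checkerboard m δ)
    (h2 : (z + fun j => if j = i then δ else 0) ∈ checkerboard m δ) : False := by
  obtain ⟨x, hx, hxz⟩ := mem_checkerboard.1 h1
  obtain ⟨y, hy, hyz⟩ := mem_checkerboard.1 h2
  have key : ∀ j, y j = x j + if j = i then 1 else 0 := by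
    intro j
    by_cases hj : j = i
    · subst hj
      have h := hyz j
      simp only [Pi.add_apply, if_pos rfl, if_true] at h
      have hr : ((y j : ℝ) - 1) * δ = (y j : ℝ) * δ - δ := by ring
      have h' : ((y j - 1 : ℤ) : ℝ) * δ - δ / 2 < z j ∧ z j < ((y j - 1 : ℤ) : ℝ) * δ + δ / 2 := by
        push_cast
        rw [hr]
        constructor <;> linarith [h.1, h.2]
      have := int_unique hδ (hxz j) h'
      simp [this]
    · have h := hyz j
      simp only [Pi.add_apply, if_neg hj, add_zero] at h
      simp [hj, int_unique hδ (hxz j) h]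
  have hsum : ∑ j, y j = (∑ j, x j) + 1 := by
    rw [Finset.sum_congr rfl fun j _ => key j, Finset.sum_add_distrib,
      Finset.sum_ite_eq' Finset.univ i (fun _ => (1 : ℤ))]
    simp
  rw [hsum] at hy
  exact (Int.even_add_one.mp hy) hx

lemma cover {δ : ℝ} (hδ : 0 < δ) (i : Fin m) :
    volume ((checkerboard m δ ∪
      (fun z => z + fun j => if j = i then δ else 0) ⁻¹' checkerboard m δ)ᶜ) = 0 := by
  have hsub : (checkerboard m δ ∪
      (fun z => z + fun j => if j = i then δ else 0) ⁻¹' checkerboard m δ)ᶜ ⊆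
      ⋃ j, ⋃ k : ℤ, {z : Fin m → ℝ | z j = (k : ℝ) * δ + δ / 2} := by
    intro z hz
    by_contra hbad
    simp only [Set.mem_iUnion, Set.mem_setOf_eq, not_exists] at hbad
    set x : Fin m → ℤ := fun j => ⌊z j / δ + 1 / 2⌋ with hxdef
    have hmem : ∀ j, (x j : ℝ) * δ - δ / 2 < z j ∧ z j < (x j : ℝ) * δ + δ / 2 := by
      intro j
      have h1 : (x j : ℝ) ≤ z j / δ + 1 / 2 := Int.floor_le _
      have h2 : z j / δ + 1 / 2 < (x j : ℝ) + 1 := Int.lt_floor_add_one _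
      have h1' : ((x j : ℝ) - 1 / 2) * δ ≤ z j := by
        rw [← le_div_iff₀ hδ]; linarith
      have h2' : z j < ((x j : ℝ) + 1 / 2) * δ := by
        rw [← div_lt_iff₀ hδ]; linarith
      constructor
      · rcases lt_or_eq_of_le h1' with h | h
        · nlinarith
        · exact absurd (by push_cast; linarith [h] : z j = ((x j - 1 : ℤ) : ℝ) * δ + δ / 2)
            (hbad j (x j - 1))
      · nlinarith
    apply hz
    rcases Int.even_or_odd (∑ j, x j) with he | ho
    · exact Or.inl (mem_checkerboard.2 ⟨x, he, hmem⟩)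
    · refine Or.inr (mem_checkerboard.2 ⟨fun j => x j + if j = i then 1 else 0, ?_, ?_⟩)
      · rw [Finset.sum_add_distrib, Finset.sum_ite_eq' Finset.univ i (fun _ => (1 : ℤ))]
        simpa using ho.add_one
      · intro j
        by_cases hj : j = i
        · subst hj
          have h := hmem j
          simp only [Pi.add_apply, if_pos rfl, if_true]
          push_cast
          constructor <;> nlinarith [h.1, h.2]
        · have h := hmem j
          simp only [Pi.add_apply, if_neg hj, add_zero]
          push_cast
          exact h
  refine measure_mono_null hsub (measure_iUnion_null fun j => measure_iUnion_null fun k => ?_)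
  have heq : {z : Fin m → ℝ | z j = (k : ℝ) * δ + δ / 2} =
      Set.univ.pi (fun i' => if i' = j then {(k : ℝ) * δ + δ / 2} else Set.univ) := by
    ext z
    simp only [Set.mem_setOf_eq, Set.mem_pi, Set.mem_univ, forall_true_left]
    constructor
    · intro h i'
      split_ifs with h' 
      · subst h'; simpa using h
      · trivial
    · intro h
      have := h j
      simpa using this
  rw [heq, volume_pi_pi]
  exact Finset.prod_eq_zero (Finset.mem_univ j) (by simp)

end Stmt18Aux

open scoped symmDiff

noncomputable instance volAddInv (m : ℕ) :
    (volume : Measure ((Fin m → ℝ) × (Fin m → ℝ))).IsAddLeftInvariant := by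
  rw [MeasureTheory.Measure.volume_eq_prod]; infer_instance

theorem translation_cont (m : ℕ) (E : Set ((Fin m → ℝ) × (Fin m → ℝ))) (hE : MeasurableSet E)
    (hEfin : volume E ≠ ⊤) (η : ℝ) (hη0 : 0 < η) :
    ∃ r > 0, ∀ u : (Fin m → ℝ) × (Fin m → ℝ), ‖u‖ < r →
      volume (((fun p => p + u) ⁻¹' E) ∆ E) < ENNReal.ofReal η := by
  let P := (Fin m → ℝ) × (Fin m → ℝ)
  let f : P → C(P, P) := fun u => ⟨fun p => p + u, continuous_add_right u⟩
  have hf : Continuous f :=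
    ContinuousMap.continuous_of_continuous_uncurry _ (continuous_snd.add continuous_fst)
  have hfg : Tendsto f (nhds 0) (nhds (ContinuousMap.id P)) := by
    have h0 : f 0 = ContinuousMap.id P := ContinuousMap.ext fun p => add_zero p
    simpa [h0] using hf.tendsto 0
  have hcont := tendsto_measure_symmDiff_preimage_nhds_zero (μ := (volume : Measure P))
      (ν := (volume : Measure P)) hfg
      (Eventually.of_forall fun u => measurePreserving_add_right volume u)
      (MeasurePreserving.id _) hE.nullMeasurableSet hEfin
  have hev : ∀ᶠ u in nhds (0 : P),
      volume (((fun p => p + u) ⁻¹' E) ∆ E) < ENNReal.ofReal η := by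
    have := hcont.eventually_lt_const (by simp [hη0] : (0:ℝ≥0∞) < ENNReal.ofReal η)
    simpa [f] using this
  obtain ⟨r, hr, hball⟩ := Metric.eventually_nhds_iff_ball.1 hev
  exact ⟨r, hr, fun u hu => hball u (by simpa [dist_zero_right] using hu)⟩


theorem stmt_18 (m : ℕ) (hm : 0 < m)
    (X : Set (Fin m → ℝ)) (hXmeas : MeasurableSet X) (hXbdd : Bornology.IsBounded X)
    (E : Set ((Fin m → ℝ) × (Fin m → ℝ))) (hE : MeasurableSet E) (hEX : E ⊆ X ×ˢ X) :
    ∀ ε : ℝ, 0 < ε → ∃ δ₀ : ℝ, 0 < δ₀ ∧ ∀ δ : ℝ, 0 < δ → δ < δ₀ →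
      ENNReal.ofReal (1 / 4 - ε) * volume E ≤
        volume ((checkerboard m δ ×ˢ (checkerboard m δ)ᶜ) ∩ E) := by
  intro ε hε
  classical
  have hEbdd : Bornology.IsBounded E := (hXbdd.prod hXbdd).subset hEX
  have hEfin : volume E ≠ ⊤ := hEbdd.measure_lt_top.ne
  by_cases hE0 : volume E = 0
  · exact ⟨1, one_pos, fun δ _ _ => by simp [hE0]⟩
  by_cases hε4 : (1:ℝ)/4 ≤ ε
  · refine ⟨1, one_pos, fun δ _ _ => ?_⟩
    rw [ENNReal.ofReal_eq_zero.2 (by linarith), zero_mul]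
    exact zero_le
  push_neg at hε4
  set η : ℝ := ε * (volume E).toReal with hηdef
  have hη0 : 0 < η := mul_pos hε (ENNReal.toReal_pos hE0 hEfin)
  obtain ⟨r, hr, hball⟩ := translation_cont m E hE hEfin η hη0
  refine ⟨r, hr, fun δ hδ hδr => ?_⟩
  set i0 : Fin m := ⟨0, hm⟩ with hi0
  set v : Fin m → ℝ := fun j => if j = i0 then δ else 0 with hv
  set S := checkerboard m δ with hS
  set T := (fun z => z + v) ⁻¹' S with hT
  have hvnorm : ‖v‖ ≤ δ := by
    refine (pi_norm_le_iff_of_nonneg hδ.le).2 fun j => ?_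
    rw [hv]; dsimp only
    split_ifs <;> simp [abs_of_nonneg hδ.le, hδ.le]
  set A := S ×ˢ T with hA
  have hTS : T ⊆ Sᶜ := fun z hz hzS => Stmt18Aux.disj hδ i0 hzS hz
  -- step lemma
  have step : ∀ w : (Fin m → ℝ) × (Fin m → ℝ), ‖w‖ < r →
      volume ((fun p => p + w) ⁻¹' A ∩ E) ≤ volume (A ∩ E) + ENNReal.ofReal η := by
    intro w hw
    have h1 : (fun p => p + w) ⁻¹' A ∩ E
        = (fun p => p + w) ⁻¹' (A ∩ (fun q => q + (-w)) ⁻¹' E) := by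
      ext p
      simp only [Set.mem_inter_iff, Set.mem_preimage, add_neg_cancel_right]
    rw [h1, measure_preimage_add_right]
    have h2 : A ∩ (fun q => q + (-w)) ⁻¹' E ⊆ (A ∩ E) ∪ ((fun q => q + (-w)) ⁻¹' E \ E) := by
      rintro p ⟨hpA, hpE⟩
      by_cases hp : p ∈ E
      · exact Or.inl ⟨hpA, hp⟩
      · exact Or.inr ⟨hpE, hp⟩
    refine le_trans (le_trans (measure_mono h2) (measure_union_le _ _)) ?_
    gcongr
    refine le_trans (measure_mono ?_) (hball (-w) (by simpa using hw)).le
    rw [Set.symmDiff_def]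
    exact Set.subset_union_left
  -- the three translated products
  have hP2 : T ×ˢ T = (fun p : (Fin m → ℝ) × (Fin m → ℝ) => p + (v, 0)) ⁻¹' A := by
    ext ⟨z, z'⟩
    simp only [Set.mem_prod, Set.mem_preimage, hA, hT, Prod.mk_add_mk, add_zero]
  have hP3 : S ×ˢ S = (fun p : (Fin m → ℝ) × (Fin m → ℝ) => p + (0, -v)) ⁻¹' A := by
    ext ⟨z, z'⟩
    simp only [Set.mem_prod, Set.mem_preimage, hA, hT, Prod.mk_add_mk, add_zero,
      neg_add_cancel_right]
  have hP4 : T ×ˢ S = (fun p : (Fin m → ℝ) × (Fin m → ℝ) => p + (v, -v)) ⁻¹' A := by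
    ext ⟨z, z'⟩
    simp only [Set.mem_prod, Set.mem_preimage, hA, hT, Prod.mk_add_mk,
      neg_add_cancel_right]
  -- coverage
  have hcovnull : volume ((S ∪ T)ᶜ) = 0 := Stmt18Aux.cover hδ i0
  have hsub2 : E \ ((S ∪ T) ×ˢ (S ∪ T)) ⊆
      ((S ∪ T)ᶜ ×ˢ (Set.univ : Set (Fin m → ℝ))) ∪ (Set.univ ×ˢ (S ∪ T)ᶜ) := by
    rintro ⟨z, z'⟩ ⟨-, hp⟩
    simp only [Set.mem_prod, not_and] at hp
    by_cases h : z ∈ S ∪ T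
    · exact Or.inr ⟨Set.mem_univ _, hp h⟩
    · exact Or.inl ⟨h, Set.mem_univ _⟩
  have hGnull : volume (E \ ((S ∪ T) ×ˢ (S ∪ T))) = 0 := by
    refine measure_mono_null hsub2 (measure_union_null ?_ ?_)
    · rw [MeasureTheory.Measure.volume_eq_prod, Measure.prod_prod, hcovnull, zero_mul]
    · rw [MeasureTheory.Measure.volume_eq_prod, Measure.prod_prod, hcovnull, mul_zero]
  have hsplit : E ∩ ((S ∪ T) ×ˢ (S ∪ T)) ⊆
      (A ∩ E) ∪ ((T ×ˢ T) ∩ E) ∪ ((S ×ˢ S) ∩ E) ∪ ((T ×ˢ S) ∩ E) := by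
    rintro ⟨z, z'⟩ ⟨hpE, hz, hz'⟩
    rcases hz with h | h <;> rcases hz' with h' | h'
    · exact Or.inl (Or.inr ⟨⟨h, h'⟩, hpE⟩)
    · exact Or.inl (Or.inl (Or.inl ⟨⟨h, h'⟩, hpE⟩))
    · exact Or.inr ⟨⟨h, h'⟩, hpE⟩
    · exact Or.inl (Or.inl (Or.inr ⟨⟨h, h'⟩, hpE⟩))
  -- norms of shift vectors
  have hw1 : ‖((v, (0 : Fin m → ℝ)) : (Fin m → ℝ) × (Fin m → ℝ))‖ < r := by
    rw [Prod.norm_def]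
    simp only [norm_zero]
    exact max_lt (lt_of_le_of_lt hvnorm hδr) hr
  have hw2 : ‖(((0 : Fin m → ℝ), -v) : (Fin m → ℝ) × (Fin m → ℝ))‖ < r := by
    rw [Prod.norm_def]
    simp only [norm_zero, norm_neg]
    exact max_lt hr (lt_of_le_of_lt hvnorm hδr)
  have hw3 : ‖((v, -v) : (Fin m → ℝ) × (Fin m → ℝ))‖ < r := by
    rw [Prod.norm_def]
    simp only [norm_neg]
    exact max_lt (lt_of_le_of_lt hvnorm hδr) (lt_of_le_of_lt hvnorm hδr)
  have e2 := step (v, 0) hw1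
  have e3 := step (0, -v) hw2
  have e4 := step (v, -v) hw3
  rw [← hP2] at e2
  rw [← hP3] at e3
  rw [← hP4] at e4
  have hbound : volume E ≤ 4 * volume (A ∩ E) + 3 * ENNReal.ofReal η := by
    calc volume E
        ≤ volume (E ∩ ((S ∪ T) ×ˢ (S ∪ T))) + volume (E \ ((S ∪ T) ×ˢ (S ∪ T))) :=
          measure_le_inter_add_diff _ _ _
      _ = volume (E ∩ ((S ∪ T) ×ˢ (S ∪ T))) := by rw [hGnull, add_zero]
      _ ≤ volume ((A ∩ E) ∪ ((T ×ˢ T) ∩ E) ∪ ((S ×ˢ S) ∩ E) ∪ ((T ×ˢ S) ∩ E)) :=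
          measure_mono hsplit
      _ ≤ volume (A ∩ E) + volume ((T ×ˢ T) ∩ E) + volume ((S ×ˢ S) ∩ E)
            + volume ((T ×ˢ S) ∩ E) := by
          refine le_trans (measure_union_le _ _) ?_
          gcongr
          refine le_trans (measure_union_le _ _) ?_
          gcongr
          exact measure_union_le _ _
      _ ≤ volume (A ∩ E) + (volume (A ∩ E) + ENNReal.ofReal η)
            + (volume (A ∩ E) + ENNReal.ofReal η) + (volume (A ∩ E) + ENNReal.ofReal η) := by
          gcongr
      _ = 4 * volume (A ∩ E) + 3 * ENNReal.ofReal η := by ring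
  have h3η : 3 * ENNReal.ofReal η = ENNReal.ofReal (3 * ε) * volume E := by
    rw [hηdef, show (3 : ℝ≥0∞) = ENNReal.ofReal (3 : ℝ) by simp,
      ← ENNReal.ofReal_mul (by norm_num),
      show (3 : ℝ) * (ε * (volume E).toReal) = (3 * ε) * (volume E).toReal by ring,
      ENNReal.ofReal_mul (by linarith), ENNReal.ofReal_toReal hEfin]
  have hplus : ENNReal.ofReal (1 - 4 * ε) * volume E + ENNReal.ofReal (3 * ε) * volume E
      ≤ 4 * volume (A ∩ E) + ENNReal.ofReal (3 * ε) * volume E := by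
    calc ENNReal.ofReal (1 - 4 * ε) * volume E + ENNReal.ofReal (3 * ε) * volume E
        = ENNReal.ofReal (1 - ε) * volume E := by
          rw [← add_mul, ← ENNReal.ofReal_add (by linarith) (by linarith),
            show 1 - 4 * ε + 3 * ε = 1 - ε by ring]
      _ ≤ 1 * volume E := by
          gcongr
          exact ENNReal.ofReal_le_one.2 (by linarith)
      _ = volume E := one_mul _
      _ ≤ 4 * volume (A ∩ E) + ENNReal.ofReal (3 * ε) * volume E := by
          rw [← h3η]; exact hbound
  have hmul : ENNReal.ofReal (1 - 4 * ε) * volume E ≤ 4 * volume (A ∩ E) :=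
    (ENNReal.add_le_add_iff_right (ENNReal.mul_ne_top ENNReal.ofReal_ne_top hEfin)).1 hplus
  have hfinal : ENNReal.ofReal (1 / 4 - ε) * volume E ≤ volume (A ∩ E) := by
    have h4 : (4 : ℝ≥0∞) * (ENNReal.ofReal (1 / 4 - ε) * volume E)
        = ENNReal.ofReal (1 - 4 * ε) * volume E := by
      rw [← mul_assoc, show (4 : ℝ≥0∞) = ENNReal.ofReal (4 : ℝ) by simp,
        ← ENNReal.ofReal_mul (by norm_num), show (4:ℝ) * (1 / 4 - ε) = 1 - 4 * ε by ring]
    refine (ENNReal.mul_le_mul_iff_right (a := (4 : ℝ≥0∞)) (by norm_num) (by norm_num)).1 ?_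
    rw [h4]
    exact hmul
  refine le_trans hfinal (measure_mono (Set.inter_subset_inter_left E ?_))
  exact Set.prod_mono subset_rfl hTS
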